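/- Let Ω be a future-complete regular domain and p ∈ ∂Ω. Then p belongs to the singularity Σ (i.e. p = r(q) for some q ∈ Ω) if and only if there exist at least two distinct future-directed null rays starting at p contained in ∂Ω, equivalently iff there is a future-directed timelike vector u with p + u^⊥ a support plane of Ω. -/

import Mathlib

/-- The Minkowski bilinear form on `ℝ^{n+1}`. -/
noncomputable def mink {n : ℕ} (v w : Fin (n+1) → ℝ) : ℝ :=
  (∑ i, v i * w i) - 2 * v 0 * w 0

/-- A future-directed timelike vector. -/
def TimelikeFuture {n : ℕ} (v : Fin (n+1) → ℝ) : Prop :=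
  mink v v < 0 ∧ 0 < v 0

/-- A future-directed null vector. -/
def NullFuture {n : ℕ} (v : Fin (n+1) → ℝ) : Prop :=
  mink v v = 0 ∧ v ≠ 0 ∧ 0 < v 0

/-- A future-complete regular domain. -/
def IsRegularDomain {n : ℕ} (Ω : Set (Fin (n+1) → ℝ)) : Prop :=
  IsOpen Ω ∧ Ω.Nonempty ∧
  ∃ Λ : Set ((Fin (n+1) → ℝ) × (Fin (n+1) → ℝ)),
    (∀ l ∈ Λ, NullFuture l.2) ∧
    (∃ l₁ ∈ Λ, ∃ l₂ ∈ Λ, ∀ s : ℝ, l₂.2 ≠ s • l₁.2) ∧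
    Ω = {x | ∀ l ∈ Λ, mink (x - l.1) l.2 < 0}

section Aux

variable {n : ℕ}

lemma mink_expand (v w : Fin (n+1) → ℝ) :
    mink v w = (∑ i : Fin n, v i.succ * w i.succ) - v 0 * w 0 := by
  simp [mink, Fin.sum_univ_succ]; ring

lemma mink_comm (v w : Fin (n+1) → ℝ) : mink v w = mink w v := by
  rw [mink_expand, mink_expand]
  rw [Finset.sum_congr rfl (fun i _ => mul_comm (v i.succ) (w i.succ))]
  ring

lemma mink_add_left (a b c : Fin (n+1) → ℝ) : mink (a + b) c = mink a c + mink b c := by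
  simp [mink, add_mul, Finset.sum_add_distrib]; ring

lemma mink_sub_left (a b c : Fin (n+1) → ℝ) : mink (a - b) c = mink a c - mink b c := by
  simp [mink, sub_mul, Finset.sum_sub_distrib]; ring

lemma mink_smul_left (s : ℝ) (a b : Fin (n+1) → ℝ) : mink (s • a) b = s * mink a b := by
  simp [mink, Finset.mul_sum, mul_assoc, mul_sub, mul_left_comm]

lemma mink_smul_right (s : ℝ) (a b : Fin (n+1) → ℝ) : mink a (s • b) = s * mink a b := by
  rw [mink_comm, mink_smul_left, mink_comm]

lemma mink_add_right (a b c : Fin (n+1) → ℝ) : mink a (b + c) = mink a b + mink a c := by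
  rw [mink_comm, mink_add_left, mink_comm a b, mink_comm a c]

lemma mink_single (w : Fin (n+1) → ℝ) : mink (Pi.single 0 1) w = - w 0 := by
  have : ∑ i : Fin (n+1), (Pi.single (0:Fin (n+1)) (1:ℝ) : Fin (n+1) → ℝ) i * w i = w 0 := by
    rw [Finset.sum_eq_single (0 : Fin (n+1))]
    · simp
    · intro i _ hi; simp [Pi.single_apply, hi]
    · simp
  simp [mink, this]; ring

lemma mink_self (v : Fin (n+1) → ℝ) :
    mink v v = (∑ i : Fin n, v i.succ ^ 2) - v 0 ^ 2 := by
  rw [mink_expand]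
  rw [Finset.sum_congr rfl (fun i _ => (sq (v i.succ)).symm)]
  ring

lemma mink_nonpos_of_causal {v w : Fin (n+1) → ℝ} (hv : mink v v ≤ 0) (hv0 : 0 < v 0)
    (hw : mink w w ≤ 0) (hw0 : 0 < w 0) : mink v w ≤ 0 := by
  have hcs := Finset.sum_mul_sq_le_sq_mul_sq Finset.univ (fun i : Fin n => v i.succ)
    (fun i : Fin n => w i.succ)
  have hQv : (0:ℝ) ≤ ∑ i : Fin n, v i.succ ^ 2 := Finset.sum_nonneg fun i _ => sq_nonneg _
  have hQw : (0:ℝ) ≤ ∑ i : Fin n, w i.succ ^ 2 := Finset.sum_nonneg fun i _ => sq_nonneg _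
  rw [mink_self] at hv hw
  rw [mink_expand]
  nlinarith [mul_pos hv0 hw0, sq_nonneg (∑ i : Fin n, v i.succ * w i.succ)]

lemma mink_neg_of_timelike_causal {v w : Fin (n+1) → ℝ} (hv : mink v v < 0) (hv0 : 0 < v 0)
    (hw : mink w w ≤ 0) (hw0 : 0 < w 0) : mink v w < 0 := by
  have hcs := Finset.sum_mul_sq_le_sq_mul_sq Finset.univ (fun i : Fin n => v i.succ)
    (fun i : Fin n => w i.succ)
  have hQv : (0:ℝ) ≤ ∑ i : Fin n, v i.succ ^ 2 := Finset.sum_nonneg fun i _ => sq_nonneg _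
  have hQw : (0:ℝ) ≤ ∑ i : Fin n, w i.succ ^ 2 := Finset.sum_nonneg fun i _ => sq_nonneg _
  rw [mink_self] at hv hw
  rw [mink_expand]
  have h1 : (0:ℝ) ≤ (∑ i : Fin n, v i.succ ^ 2) * (w 0 ^ 2 - ∑ i : Fin n, w i.succ ^ 2) :=
    mul_nonneg hQv (by linarith)
  have h2 : (0:ℝ) < (v 0 ^ 2 - ∑ i : Fin n, v i.succ ^ 2) * w 0 ^ 2 :=
    mul_pos (by linarith) (pow_pos hw0 2)
  nlinarith [mul_pos hv0 hw0]

lemma null_prop {v w : Fin (n+1) → ℝ} (hv : mink v v = 0) (hv0 : 0 < v 0)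
    (hw : mink w w = 0) (hw0 : 0 < w 0) (h : mink v w = 0) :
    ∃ s : ℝ, 0 < s ∧ w = s • v := by
  rw [mink_self] at hv hw
  rw [mink_expand] at h
  have key : ∑ i : Fin n, (w 0 * v i.succ - v 0 * w i.succ) ^ 2 = 0 := by
    have : ∀ i : Fin n, (w 0 * v i.succ - v 0 * w i.succ) ^ 2 =
        w 0 ^ 2 * v i.succ ^ 2 - 2 * (v 0 * w 0) * (v i.succ * w i.succ)
          + v 0 ^ 2 * w i.succ ^ 2 := fun i => by ring
    rw [Finset.sum_congr rfl fun i _ => this i]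
    rw [Finset.sum_add_distrib, Finset.sum_sub_distrib, ← Finset.mul_sum, ← Finset.mul_sum,
      ← Finset.mul_sum]
    linear_combination (w 0 ^ 2) * hv + (v 0 ^ 2) * hw - 2 * (v 0 * w 0) * h
  have hz : ∀ i : Fin n, w 0 * v i.succ - v 0 * w i.succ = 0 := by
    intro i
    have := (Finset.sum_eq_zero_iff_of_nonneg (fun j _ => sq_nonneg
      (w 0 * v j.succ - v 0 * w j.succ))).1 key i (Finset.mem_univ i)
    exact (pow_eq_zero_iff two_ne_zero).1 this
  refine ⟨w 0 / v 0, div_pos hw0 hv0, funext fun i => ?_⟩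
  refine Fin.cases ?_ (fun j => ?_) i
  · simp only [Pi.smul_apply, smul_eq_mul]
    field_simp
  · have := hz j
    simp only [Pi.smul_apply, smul_eq_mul]
    field_simp
    linarith [this]

lemma mink_cont_right (v : Fin (n+1) → ℝ) : Continuous fun w : Fin (n+1) → ℝ => mink v w := by
  unfold mink
  exact (continuous_finset_sum _ fun i _ => continuous_const.mul (continuous_apply i)).sub
    (continuous_const.mul (continuous_apply 0))

lemma mink_cont_pair : Continuous fun q : (Fin (n+1) → ℝ) × (Fin (n+1) → ℝ) => mink q.1 q.2 := by
  unfold mink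
  exact (continuous_finset_sum _ fun i _ => ((continuous_apply i).comp continuous_fst).mul
      ((continuous_apply i).comp continuous_snd)).sub
    ((continuous_const.mul ((continuous_apply 0).comp continuous_fst)).mul
      ((continuous_apply 0).comp continuous_snd))

lemma mink_cont_affine (a b : Fin (n+1) → ℝ) : Continuous fun x => mink (x - a) b := by
  have : (fun x : Fin (n+1) → ℝ => mink (x - a) b) = fun x => mink b x - mink b a := by
    funext x
    rw [mink_sub_left, mink_comm x b, mink_comm a b]
  rw [this]
  exact (mink_cont_right b).sub continuous_const

lemma normalize_null {v : Fin (n+1) → ℝ} (hv : NullFuture v) :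
    NullFuture ((v 0)⁻¹ • v) ∧ ((v 0)⁻¹ • v) 0 = 1 := by
  have hv0 := hv.2.2
  have h0 : ((v 0)⁻¹ • v) 0 = 1 := by
    simp only [Pi.smul_apply, smul_eq_mul]
    field_simp
  refine ⟨⟨?_, ?_, ?_⟩, h0⟩
  · rw [mink_smul_left, mink_smul_right, hv.1]; ring
  · intro h; rw [h] at h0; simp at h0
  · rw [h0]; exact one_pos

lemma null_norm_coords {w : Fin (n+1) → ℝ} (hw : NullFuture w) (h0 : w 0 = 1) :
    ∀ i, |w i| ≤ 1 := by
  have hsum : ∑ i : Fin n, w i.succ ^ 2 = 1 := by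
    have := hw.1
    rw [mink_self, h0] at this
    linarith
  intro i
  refine Fin.cases ?_ (fun j => ?_) i
  · rw [h0]; simp
  · have hle : w j.succ ^ 2 ≤ 1 := by
      rw [← hsum]
      exact Finset.single_le_sum (fun i _ => sq_nonneg (w i.succ)) (Finset.mem_univ j)
    nlinarith [abs_nonneg (w j.succ), sq_abs (w j.succ)]

lemma mink_bound (d w : Fin (n+1) → ℝ) (h : ∀ i, |w i| ≤ 1) :
    mink d w ≤ (∑ i, |d i|) + 2 * |d 0| := by
  unfold mink
  have h1 : ∑ i, d i * w i ≤ ∑ i, |d i| := by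
    refine Finset.sum_le_sum fun i _ => ?_
    calc d i * w i ≤ |d i * w i| := le_abs_self _
    _ = |d i| * |w i| := abs_mul _ _
    _ ≤ |d i| * 1 := mul_le_mul_of_nonneg_left (h i) (abs_nonneg _)
    _ = |d i| := mul_one _
  have h2 : -(2 * d 0 * w 0) ≤ 2 * |d 0| := by
    calc -(2 * d 0 * w 0) ≤ |2 * d 0 * w 0| := neg_le_abs _
    _ = 2 * |d 0| * |w 0| := by rw [abs_mul, abs_mul]; simp
    _ ≤ 2 * |d 0| * 1 := mul_le_mul_of_nonneg_left (h 0) (by positivity)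
    _ = 2 * |d 0| := mul_one _
  linarith

lemma closure_char {Ω : Set (Fin (n+1) → ℝ)}
    {Λ : Set ((Fin (n+1) → ℝ) × (Fin (n+1) → ℝ))}
    (hnull : ∀ l ∈ Λ, NullFuture l.2)
    (hΩeq : Ω = {x | ∀ l ∈ Λ, mink (x - l.1) l.2 < 0}) :
    closure Ω = {x | ∀ l ∈ Λ, mink (x - l.1) l.2 ≤ 0} := by
  apply Set.Subset.antisymm
  · apply closure_minimal
    · intro x hx l hl
      exact le_of_lt ((hΩeq ▸ hx) l hl)
    · have : {x : Fin (n+1) → ℝ | ∀ l ∈ Λ, mink (x - l.1) l.2 ≤ 0} =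
          ⋂ l ∈ Λ, {x | mink (x - l.1) l.2 ≤ 0} := by
        ext x; simp
      rw [this]
      exact isClosed_biInter fun l _ => isClosed_le (mink_cont_affine l.1 l.2) continuous_const
  · intro x hx
    set τ : Fin (n+1) → ℝ := Pi.single 0 1 with hτdef
    have hmem : ∀ s : ℝ, 0 < s → x + s • τ ∈ Ω := by
      intro s hs
      rw [hΩeq]
      intro l hl
      rw [add_sub_right_comm, mink_add_left, mink_smul_left, mink_single]
      have h1 := hx l hl
      have h2 : -(l.2 0) < 0 := neg_neg_iff_pos.2 (hnull l hl).2.2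
      nlinarith [mul_neg_of_pos_of_neg hs h2]
    have hlim : Filter.Tendsto (fun k : ℕ => x + (1/(k+1:ℝ)) • τ) Filter.atTop (nhds x) := by
      have h0 : Filter.Tendsto (fun k : ℕ => (1/(k+1:ℝ))) Filter.atTop (nhds 0) :=
        tendsto_one_div_add_atTop_nhds_zero_nat
      have := h0.smul_const τ
      rw [zero_smul] at this
      simpa using tendsto_const_nhds.add this
    exact mem_closure_of_tendsto hlim (Filter.Eventually.of_forall fun k =>
      hmem _ (by positivity))

end Aux
section Main

variable {n : ℕ}

lemma support_ray {Ω : Set (Fin (n+1) → ℝ)}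
    {Λ : Set ((Fin (n+1) → ℝ) × (Fin (n+1) → ℝ))}
    (hopen : IsOpen Ω)
    (hnull : ∀ l ∈ Λ, NullFuture l.2)
    (hΩeq : Ω = {x | ∀ l ∈ Λ, mink (x - l.1) l.2 < 0})
    {p : Fin (n+1) → ℝ} (hpcl : p ∈ closure Ω) (hpnΩ : p ∉ Ω)
    {z : Fin (n+1) → ℝ} (hz : NullFuture z)
    (hsupp : ∀ x ∈ closure Ω, mink (x - p) z ≤ 0) :
    ∀ t : ℝ, 0 ≤ t → p + t • z ∈ frontier Ω := by
  have hcl := closure_char hnull hΩeq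
  intro t ht
  rw [hopen.frontier_eq]
  constructor
  · rw [hcl]
    intro l hl
    rw [add_sub_right_comm, mink_add_left, mink_smul_left]
    have h1 : mink (p - l.1) l.2 ≤ 0 := (hcl ▸ hpcl) l hl
    have h2 : mink z l.2 ≤ 0 := mink_nonpos_of_causal hz.1.le hz.2.2
      (hnull l hl).1.le (hnull l hl).2.2
    nlinarith [mul_nonneg ht (neg_nonneg.2 h2)]
  · rcases eq_or_lt_of_le ht with h | h
    · rw [← h, zero_smul, add_zero]
      exact hpnΩ
    · intro hmem
      set e : Fin (n+1) → ℝ := z - (2 * z 0) • (Pi.single 0 1 : Fin (n+1) → ℝ) with he_def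
      have he : mink e z = 2 * (z 0)^2 := by
        rw [he_def, mink_sub_left, mink_smul_left, mink_single, hz.1]
        ring
      obtain ⟨r, hr, hball⟩ := Metric.isOpen_iff.1 hopen _ hmem
      set ε : ℝ := r / (2 * (‖e‖ + 1)) with hε_def
      have hε : 0 < ε := by
        apply div_pos hr
        positivity
      have hdist : p + t • z + ε • e ∈ Metric.ball (p + t • z) r := by
        rw [Metric.mem_ball, dist_eq_norm, add_sub_cancel_left, norm_smul,
          Real.norm_eq_abs, abs_of_pos hε]
        have hne : (0:ℝ) ≤ ‖e‖ := norm_nonneg _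
        have key : ε * (‖e‖ + 1) = r / 2 := by
          rw [hε_def]
          field_simp
        nlinarith
      have hin : p + t • z + ε • e ∈ Ω := hball hdist
      have hle := hsupp _ (subset_closure hin)
      rw [show p + t • z + ε • e - p = t • z + ε • e by abel, mink_add_left,
        mink_smul_left, mink_smul_left, hz.1, he] at hle
      nlinarith [mul_pos hε (pow_pos hz.2.2 2)]

end Main

/-- Characterization of the singularity in the past: a point `p ∈ ∂Ω` of a future-complete
regular domain `Ω` belongs to the singularity `Σ = r(Ω)` (i.e. `p = r(q)` for some `q ∈ Ω`,
where `r(q)` is characterized by `q - r(q)` being future timelike with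
`r(q) + (q - r(q))^⊥` a support plane) if and only if there exist at least two distinct
(non-proportional) future-directed null rays starting at `p` contained in `∂Ω`,
equivalently iff there is a future-directed timelike vector `u` with `p + u^⊥` a support
plane of `Ω`. -/
theorem singularity_characterization {n : ℕ}
    (Ω : Set (Fin (n+1) → ℝ)) (hΩ : IsRegularDomain Ω)
    (p : Fin (n+1) → ℝ) (hp : p ∈ frontier Ω) :
    ((∃ q ∈ Ω, TimelikeFuture (q - p) ∧ ∀ x ∈ closure Ω, mink (x - p) (q - p) ≤ 0) ↔
      (∃ v w : Fin (n+1) → ℝ, NullFuture v ∧ NullFuture w ∧ (∀ s : ℝ, w ≠ s • v) ∧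
        (∀ t : ℝ, 0 ≤ t → p + t • v ∈ frontier Ω) ∧
        (∀ t : ℝ, 0 ≤ t → p + t • w ∈ frontier Ω))) ∧
    ((∃ q ∈ Ω, TimelikeFuture (q - p) ∧ ∀ x ∈ closure Ω, mink (x - p) (q - p) ≤ 0) ↔
      (∃ u : Fin (n+1) → ℝ, TimelikeFuture u ∧ ∀ x ∈ closure Ω, mink (x - p) u ≤ 0)) := by
  obtain ⟨hopen, hne, Λ, hnull, hpair, hΩeq⟩ := hΩ
  have hcl := closure_char hnull hΩeq
  have hpcl : p ∈ closure Ω := frontier_subset_closure hp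
  have hpnΩ : p ∉ Ω := by rw [hopen.frontier_eq] at hp; exact hp.2
  -- C → A
  have hCA : (∃ u : Fin (n+1) → ℝ, TimelikeFuture u ∧ ∀ x ∈ closure Ω, mink (x - p) u ≤ 0) →
      (∃ q ∈ Ω, TimelikeFuture (q - p) ∧ ∀ x ∈ closure Ω, mink (x - p) (q - p) ≤ 0) := by
    rintro ⟨u, hu, hsupp⟩
    have hq : p + u ∈ Ω := by
      rw [hΩeq]
      intro l hl
      have h1 : mink (p - l.1) l.2 ≤ 0 := (hcl ▸ hpcl) l hl
      have h2 : mink u l.2 < 0 := mink_neg_of_timelike_causal hu.1 hu.2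
        (hnull l hl).1.le (hnull l hl).2.2
      rw [add_sub_right_comm, mink_add_left]
      linarith
    refine ⟨p + u, hq, ?_, ?_⟩
    · rw [add_sub_cancel_left]; exact hu
    · rw [add_sub_cancel_left]; exact hsupp
  -- A → C
  have hAC : (∃ q ∈ Ω, TimelikeFuture (q - p) ∧ ∀ x ∈ closure Ω, mink (x - p) (q - p) ≤ 0) →
      (∃ u : Fin (n+1) → ℝ, TimelikeFuture u ∧ ∀ x ∈ closure Ω, mink (x - p) u ≤ 0) := by
    rintro ⟨q, _, ht, hs⟩
    exact ⟨q - p, ht, hs⟩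
  -- B → C
  have hBC : (∃ v w : Fin (n+1) → ℝ, NullFuture v ∧ NullFuture w ∧ (∀ s : ℝ, w ≠ s • v) ∧
      (∀ t : ℝ, 0 ≤ t → p + t • v ∈ frontier Ω) ∧
      (∀ t : ℝ, 0 ≤ t → p + t • w ∈ frontier Ω)) →
      (∃ u : Fin (n+1) → ℝ, TimelikeFuture u ∧ ∀ x ∈ closure Ω, mink (x - p) u ≤ 0) := by
    rintro ⟨v, w, hv, hw, hvw, hrv, hrw⟩
    have key : ∀ z : Fin (n+1) → ℝ, NullFuture z → p + z ∈ frontier Ω →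
        ∀ x ∈ closure Ω, mink (x - p) z ≤ 0 := by
      intro z hz hzf
      have hznΩ : p + z ∉ Ω := by rw [hopen.frontier_eq] at hzf; exact hzf.2
      rw [hΩeq] at hznΩ
      simp only [Set.mem_setOf_eq, not_forall, not_lt, exists_prop] at hznΩ
      obtain ⟨l, hl, hge⟩ := hznΩ
      have e1 : mink (p - l.1) l.2 ≤ 0 := (hcl ▸ hpcl) l hl
      have e2 : mink z l.2 ≤ 0 := mink_nonpos_of_causal hz.1.le hz.2.2
        (hnull l hl).1.le (hnull l hl).2.2
      rw [add_sub_right_comm, mink_add_left] at hge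
      have e1' : mink (p - l.1) l.2 = 0 := by linarith
      have e2' : mink z l.2 = 0 := by linarith
      obtain ⟨s, hs, hlz⟩ := null_prop hz.1 hz.2.2 (hnull l hl).1 (hnull l hl).2.2 e2'
      intro x hx
      have hxl : mink (x - l.1) l.2 ≤ 0 := (hcl ▸ hx) l hl
      have hxp : mink (x - p) l.2 ≤ 0 := by
        rw [← sub_sub_sub_cancel_right x p l.1, mink_sub_left, e1']
        linarith
      rw [hlz, mink_smul_right] at hxp
      nlinarith
    have sv := key v hv (by simpa using hrv 1 zero_le_one)
    have sw := key w hw (by simpa using hrw 1 zero_le_one)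
    refine ⟨v + w, ⟨?_, ?_⟩, fun x hx => ?_⟩
    · have hle := mink_nonpos_of_causal hv.1.le hv.2.2 hw.1.le hw.2.2
      have hne0 : mink v w ≠ 0 := by
        intro h
        obtain ⟨s, _, hsw⟩ := null_prop hv.1 hv.2.2 hw.1 hw.2.2 h
        exact hvw s hsw
      have hexp : mink (v + w) (v + w) = mink v v + mink v w + (mink w v + mink w w) := by
        rw [mink_add_left, mink_add_right, mink_add_right]
      rw [hexp, hv.1, hw.1, mink_comm w v]
      have := lt_of_le_of_ne hle hne0
      linarith
    · have h0 : (v + w) 0 = v 0 + w 0 := rfl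
      rw [h0]; exact add_pos hv.2.2 hw.2.2
    · rw [mink_add_right]
      linarith [sv x hx, sw x hx]
  -- C → B
  have hCB : (∃ u : Fin (n+1) → ℝ, TimelikeFuture u ∧ ∀ x ∈ closure Ω, mink (x - p) u ≤ 0) →
      (∃ v w : Fin (n+1) → ℝ, NullFuture v ∧ NullFuture w ∧ (∀ s : ℝ, w ≠ s • v) ∧
      (∀ t : ℝ, 0 ≤ t → p + t • v ∈ frontier Ω) ∧
      (∀ t : ℝ, 0 ≤ t → p + t • w ∈ frontier Ω)) := by
    rintro ⟨u, hu, hsupp⟩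
    -- active null support direction v
    have hex : ∃ l, l ∈ Λ ∧ 0 ≤ mink (p - l.1) l.2 := by
      have h := hpnΩ
      rw [hΩeq] at h
      simp only [Set.mem_setOf_eq, not_forall, not_lt, exists_prop] at h
      exact h
    obtain ⟨l, hl, hge⟩ := hex
    have heq : mink (p - l.1) l.2 = 0 := le_antisymm ((hcl ▸ hpcl) l hl) hge
    obtain ⟨hvN, hv0⟩ := normalize_null (hnull l hl)
    set v : Fin (n+1) → ℝ := ((l.2 0)⁻¹) • l.2 with hvdef
    have hinv : 0 < (l.2 0)⁻¹ := inv_pos.2 (hnull l hl).2.2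
    have hsuppv : ∀ x ∈ closure Ω, mink (x - p) v ≤ 0 := by
      intro x hx
      have hxl : mink (x - l.1) l.2 ≤ 0 := (hcl ▸ hx) l hl
      have hxp : mink (x - p) l.2 ≤ 0 := by
        rw [← sub_sub_sub_cancel_right x p l.1, mink_sub_left, heq]
        linarith
      rw [hvdef, mink_smul_right]
      nlinarith
    have hmuv : mink u v < 0 := mink_neg_of_timelike_causal hu.1 hu.2 hvN.1.le hvN.2.2
    set d : Fin (n+1) → ℝ := u + ((1 - mink u u) / mink u v) • v with hddef
    have hdv : mink d v = mink u v := by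
      rw [hddef, mink_add_left, mink_smul_left, hvN.1, mul_zero, add_zero]
    have hdu : mink d u = 1 := by
      rw [hddef, mink_add_left, mink_smul_left, mink_comm v u, div_mul_cancel₀ _ hmuv.ne]
      ring
    have hnotin : ∀ t : ℝ, 0 < t → p + t • d ∉ Ω := by
      intro t ht hmem
      have hle := hsupp _ (subset_closure hmem)
      rw [add_sub_cancel_left, mink_smul_left, hdu, mul_one] at hle
      linarith
    have hseq : ∀ k : ℕ, ∃ l', l' ∈ Λ ∧ 0 ≤ mink (p + (1/(k+1:ℝ)) • d - l'.1) l'.2 := by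
      intro k
      have h := hnotin (1/(k+1:ℝ)) (by positivity)
      rw [hΩeq] at h
      simp only [Set.mem_setOf_eq, not_forall, not_lt, exists_prop] at h
      exact h
    choose L hLmem hLge using hseq
    set W : ℕ → (Fin (n+1) → ℝ) := fun k => (((L k).2 0)⁻¹) • (L k).2 with hWdef
    have hWk : ∀ k, W k = (((L k).2 0)⁻¹) • (L k).2 := fun k => rfl
    have hWN : ∀ k, NullFuture (W k) ∧ W k 0 = 1 := fun k => normalize_null (hnull _ (hLmem k))
    have hWcoords : ∀ k i, |W k i| ≤ 1 := fun k => null_norm_coords (hWN k).1 (hWN k).2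
    have hC0 : (0:ℝ) ≤ (∑ i, |d i|) + 2 * |d 0| := by
      have h1 : (0:ℝ) ≤ ∑ i, |d i| := Finset.sum_nonneg fun i _ => abs_nonneg _
      have h2 : (0:ℝ) ≤ |d 0| := abs_nonneg _
      linarith
    have hainew : ∀ k, 0 ≤ mink (p - (L k).1) (W k) + (1/(k+1:ℝ)) * mink d (W k) := by
      intro k
      have hinvk : 0 < (((L k).2 0)⁻¹) := inv_pos.2 (hnull _ (hLmem k)).2.2
      have h2 : 0 ≤ mink (p + (1/(k+1:ℝ)) • d - (L k).1) (W k) := by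
        rw [hWk, mink_smul_right]
        exact mul_nonneg hinvk.le (hLge k)
      rw [add_sub_right_comm, mink_add_left, mink_smul_left] at h2
      exact h2
    have haneg : ∀ k, mink (p - (L k).1) (W k) ≤ 0 := by
      intro k
      have hxl : mink (p - (L k).1) ((L k).2) ≤ 0 := (hcl ▸ hpcl) _ (hLmem k)
      have hinvk : 0 < (((L k).2 0)⁻¹) := inv_pos.2 (hnull _ (hLmem k)).2.2
      rw [hWk, mink_smul_right]
      nlinarith
    have hdW : ∀ k, 0 ≤ mink d (W k) := by
      intro k
      have h1 := hainew k
      have hk : (0:ℝ) < 1/(k+1:ℝ) := by positivity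
      nlinarith [haneg k]
    have haLB : ∀ k : ℕ, -(((∑ i, |d i|) + 2 * |d 0|) * (1/(k+1:ℝ))) ≤ mink (p - (L k).1) (W k) := by
      intro k
      have hb := mink_bound d (W k) (hWcoords k)
      have hk : (0:ℝ) < 1/(k+1:ℝ) := by positivity
      have h1 := hainew k
      nlinarith
    have hWball : ∀ k, W k ∈ Metric.closedBall (0 : Fin (n+1) → ℝ) 1 := by
      intro k
      rw [Metric.mem_closedBall, dist_zero_right, pi_norm_le_iff_of_nonneg zero_le_one]
      intro i
      rw [Real.norm_eq_abs]
      exact hWcoords k i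
    obtain ⟨w, hwmem, φ, hφ, hconv⟩ :=
      tendsto_subseq_of_bounded Metric.isBounded_closedBall hWball
    have hw0 : w 0 = 1 := by
      have h1 : Filter.Tendsto (fun k => W (φ k) 0) Filter.atTop (nhds (w 0)) :=
        ((continuous_apply 0).tendsto w).comp hconv
      have h2 : (fun k => W (φ k) 0) = fun _ => (1:ℝ) := funext fun k => (hWN (φ k)).2
      rw [h2] at h1
      exact tendsto_nhds_unique h1 tendsto_const_nhds
    have hwnull : NullFuture w := by
      refine ⟨?_, ?_, ?_⟩
      · have h1 : Filter.Tendsto (fun k => mink (W (φ k)) (W (φ k))) Filter.atTop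
            (nhds (mink w w)) :=
          by
            have h := (mink_cont_pair.tendsto (w, w)).comp
              ((hconv.prodMk_nhds hconv : Filter.Tendsto (fun k => (W (φ k), W (φ k)))
                Filter.atTop (nhds (w, w))))
            exact h.congr fun k => rfl
        have h2 : (fun k => mink (W (φ k)) (W (φ k))) = fun _ => (0:ℝ) :=
          funext fun k => (hWN (φ k)).1.1
        rw [h2] at h1
        exact (tendsto_nhds_unique h1 tendsto_const_nhds)
      · intro h0
        rw [h0] at hw0
        simp at hw0
      · rw [hw0]; exact one_pos
    have hsuppw : ∀ x ∈ closure Ω, mink (x - p) w ≤ 0 := by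
      intro x hx
      have hxk : ∀ k, mink (x - p) (W k) ≤ -(mink (p - (L k).1) (W k)) := by
        intro k
        have hxl : mink (x - (L k).1) ((L k).2) ≤ 0 := (hcl ▸ hx) _ (hLmem k)
        have hinvk : 0 < (((L k).2 0)⁻¹) := inv_pos.2 (hnull _ (hLmem k)).2.2
        have hxlW : mink (x - (L k).1) (W k) ≤ 0 := by
          rw [hWk, mink_smul_right]
          nlinarith
        have hsplit : mink (x - p) (W k) =
            mink (x - (L k).1) (W k) - mink (p - (L k).1) (W k) := by
          rw [← sub_sub_sub_cancel_right x p (L k).1, mink_sub_left]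
        rw [hsplit]
        linarith
      have haconv : Filter.Tendsto (fun k => -(mink (p - (L (φ k)).1) (W (φ k))))
          Filter.atTop (nhds 0) := by
        have hub : ∀ k, -(mink (p - (L (φ k)).1) (W (φ k))) ≤
            ((∑ i, |d i|) + 2 * |d 0|) * (1/(k+1:ℝ)) := by
          intro k
          have h1 := haLB (φ k)
          have h2 : (k:ℝ) + 1 ≤ (φ k : ℝ) + 1 := by
            have := hφ.le_apply (x := k)
            exact_mod_cast add_le_add_left (Nat.cast_le.2 this) 1
          have h3 : 1/((φ k:ℝ)+1) ≤ 1/((k:ℝ)+1) :=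
            one_div_le_one_div_of_le (by positivity) h2
          have h4 : ((φ k : ℝ) + 1) = ((φ k : ℕ) : ℝ) + 1 := by norm_cast
          nlinarith
        have hlb : ∀ k, 0 ≤ -(mink (p - (L (φ k)).1) (W (φ k))) :=
          fun k => neg_nonneg.2 (haneg (φ k))
        have hCconv : Filter.Tendsto
            (fun k : ℕ => ((∑ i, |d i|) + 2 * |d 0|) * (1/(k+1:ℝ)))
            Filter.atTop (nhds 0) := by
          have := tendsto_one_div_add_atTop_nhds_zero_nat.const_mul
            ((∑ i, |d i|) + 2 * |d 0|)
          simpa using this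
        exact tendsto_of_tendsto_of_tendsto_of_le_of_le tendsto_const_nhds hCconv hlb hub
      have hxconv : Filter.Tendsto (fun k => mink (x - p) (W (φ k))) Filter.atTop
          (nhds (mink (x - p) w)) :=
        ((mink_cont_right (x - p)).tendsto w).comp hconv
      have := le_of_tendsto_of_tendsto' hxconv haconv (fun k => hxk (φ k))
      linarith
    have hdw : 0 ≤ mink d w := by
      have hdconv : Filter.Tendsto (fun k => mink d (W (φ k))) Filter.atTop
          (nhds (mink d w)) :=
        ((mink_cont_right d).tendsto w).comp hconv
      exact le_of_tendsto_of_tendsto' tendsto_const_nhds hdconv (fun k => hdW (φ k))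
    have hwv : ∀ s : ℝ, w ≠ s • v := by
      intro s hsw
      have hsval : w 0 = s * v 0 := by rw [hsw]; simp
      rw [hw0, hv0, mul_one] at hsval
      rw [← hsval, one_smul] at hsw
      rw [hsw, hdv] at hdw
      linarith
    exact ⟨v, w, hvN, hwnull, hwv,
      support_ray hopen hnull hΩeq hpcl hpnΩ hvN hsuppv,
      support_ray hopen hnull hΩeq hpcl hpnΩ hwnull hsuppw⟩
  exact ⟨⟨fun hA => hCB (hAC hA), fun hB => hCA (hBC hB)⟩, ⟨hAC, hCA⟩⟩
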